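/- For subspaces N_c, N_s, N_e of ℂ^n, the sum of the seven subspaces V_n, V_c, V_s, V_e, V_cs, V_ce, V_se (defined as in the eight-subspace decomposition) equals N_c + N_s + N_e. -/

import Mathlib

open Matrix

noncomputable section

/-- The ambient space `ℂ^n` with its standard Hermitian inner product. -/
abbrev Cn (n : ℕ) := EuclideanSpace ℂ (Fin n)

variable {n : ℕ}

/-- `V_n = N_c ∩ N_s ∩ N_e`. -/
def Vn (Nc Ns Ne : Submodule ℂ (Cn n)) : Submodule ℂ (Cn n) := Nc ⊓ Ns ⊓ Ne

/-- `V_c = V_nᗮ ∩ N_s ∩ N_e`. -/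
def Vc (Nc Ns Ne : Submodule ℂ (Cn n)) : Submodule ℂ (Cn n) := (Vn Nc Ns Ne)ᗮ ⊓ Ns ⊓ Ne

/-- `V_s = V_nᗮ ∩ N_e ∩ N_c`. -/
def Vs (Nc Ns Ne : Submodule ℂ (Cn n)) : Submodule ℂ (Cn n) := (Vn Nc Ns Ne)ᗮ ⊓ Ne ⊓ Nc

/-- `V_e = V_nᗮ ∩ N_c ∩ N_s`. -/
def Ve (Nc Ns Ne : Submodule ℂ (Cn n)) : Submodule ℂ (Cn n) := (Vn Nc Ns Ne)ᗮ ⊓ Nc ⊓ Ns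

/-- `V_cs = (V_n ⊕ V_c ⊕ V_s)ᗮ ∩ N_e`. -/
def Vcs (Nc Ns Ne : Submodule ℂ (Cn n)) : Submodule ℂ (Cn n) :=
  (Vn Nc Ns Ne ⊔ Vc Nc Ns Ne ⊔ Vs Nc Ns Ne)ᗮ ⊓ Ne

/-- `V_ce = (V_n ⊕ V_e ⊕ V_c)ᗮ ∩ N_s`. -/
def Vce (Nc Ns Ne : Submodule ℂ (Cn n)) : Submodule ℂ (Cn n) :=
  (Vn Nc Ns Ne ⊔ Ve Nc Ns Ne ⊔ Vc Nc Ns Ne)ᗮ ⊓ Ns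

/-- `V_se = (V_n ⊕ V_s ⊕ V_e)ᗮ ∩ N_c`. -/
def Vse (Nc Ns Ne : Submodule ℂ (Cn n)) : Submodule ℂ (Cn n) :=
  (Vn Nc Ns Ne ⊔ Vs Nc Ns Ne ⊔ Ve Nc Ns Ne)ᗮ ⊓ Nc

/-- `V_cse = (V_n + V_c + V_s + V_e + V_cs + V_ce + V_se)ᗮ`. -/
def Vcse (Nc Ns Ne : Submodule ℂ (Cn n)) : Submodule ℂ (Cn n) :=
  (Vn Nc Ns Ne ⊔ Vc Nc Ns Ne ⊔ Vs Nc Ns Ne ⊔ Ve Nc Ns Ne ⊔ Vcs Nc Ns Ne ⊔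
    Vce Nc Ns Ne ⊔ Vse Nc Ns Ne)ᗮ

/-- The sum of the seven subspaces
`V_n, V_c, V_s, V_e, V_cs, V_ce, V_se` equals `N_c + N_s + N_e`. -/
theorem stmt5 (Nc Ns Ne : Submodule ℂ (Cn n)) :
    Vn Nc Ns Ne ⊔ Vc Nc Ns Ne ⊔ Vs Nc Ns Ne ⊔ Ve Nc Ns Ne ⊔ Vcs Nc Ns Ne ⊔
        Vce Nc Ns Ne ⊔ Vse Nc Ns Ne =
      Nc ⊔ Ns ⊔ Ne := by
  have key : ∀ (U W : Submodule ℂ (Cn n)), U ≤ W → U ⊔ (Uᗮ ⊓ W) = W := fun U W h =>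
    Submodule.sup_orthogonal_inf_of_hasOrthogonalProjection h
  -- abbreviations for "each piece is below the big sup"
  have hA : Vn Nc Ns Ne ≤ Vn Nc Ns Ne ⊔ Vc Nc Ns Ne ⊔ Vs Nc Ns Ne ⊔ Ve Nc Ns Ne ⊔
      Vcs Nc Ns Ne ⊔ Vce Nc Ns Ne ⊔ Vse Nc Ns Ne := by
    exact le_sup_of_le_left (le_sup_of_le_left (le_sup_of_le_left (le_sup_of_le_left
      (le_sup_of_le_left (le_sup_of_le_left le_rfl)))))
  have hB : Vc Nc Ns Ne ≤ Vn Nc Ns Ne ⊔ Vc Nc Ns Ne ⊔ Vs Nc Ns Ne ⊔ Ve Nc Ns Ne ⊔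
      Vcs Nc Ns Ne ⊔ Vce Nc Ns Ne ⊔ Vse Nc Ns Ne := by
    exact le_sup_of_le_left (le_sup_of_le_left (le_sup_of_le_left (le_sup_of_le_left
      (le_sup_of_le_left le_sup_right))))
  have hC : Vs Nc Ns Ne ≤ Vn Nc Ns Ne ⊔ Vc Nc Ns Ne ⊔ Vs Nc Ns Ne ⊔ Ve Nc Ns Ne ⊔
      Vcs Nc Ns Ne ⊔ Vce Nc Ns Ne ⊔ Vse Nc Ns Ne := by
    exact le_sup_of_le_left (le_sup_of_le_left (le_sup_of_le_left (le_sup_of_le_left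
      le_sup_right)))
  have hD : Ve Nc Ns Ne ≤ Vn Nc Ns Ne ⊔ Vc Nc Ns Ne ⊔ Vs Nc Ns Ne ⊔ Ve Nc Ns Ne ⊔
      Vcs Nc Ns Ne ⊔ Vce Nc Ns Ne ⊔ Vse Nc Ns Ne := by
    exact le_sup_of_le_left (le_sup_of_le_left (le_sup_of_le_left le_sup_right))
  have hE : Vcs Nc Ns Ne ≤ Vn Nc Ns Ne ⊔ Vc Nc Ns Ne ⊔ Vs Nc Ns Ne ⊔ Ve Nc Ns Ne ⊔
      Vcs Nc Ns Ne ⊔ Vce Nc Ns Ne ⊔ Vse Nc Ns Ne := by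
    exact le_sup_of_le_left (le_sup_of_le_left le_sup_right)
  have hF : Vce Nc Ns Ne ≤ Vn Nc Ns Ne ⊔ Vc Nc Ns Ne ⊔ Vs Nc Ns Ne ⊔ Ve Nc Ns Ne ⊔
      Vcs Nc Ns Ne ⊔ Vce Nc Ns Ne ⊔ Vse Nc Ns Ne := le_sup_of_le_left le_sup_right
  have hG : Vse Nc Ns Ne ≤ Vn Nc Ns Ne ⊔ Vc Nc Ns Ne ⊔ Vs Nc Ns Ne ⊔ Ve Nc Ns Ne ⊔
      Vcs Nc Ns Ne ⊔ Vce Nc Ns Ne ⊔ Vse Nc Ns Ne := le_sup_right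
  apply le_antisymm
  · refine sup_le (sup_le (sup_le (sup_le (sup_le (sup_le ?_ ?_) ?_) ?_) ?_) ?_) ?_
    · exact le_sup_of_le_right inf_le_right
    · exact le_sup_of_le_right inf_le_right
    · exact le_sup_of_le_left (le_sup_of_le_left inf_le_right)
    · exact le_sup_of_le_left (le_sup_of_le_right inf_le_right)
    · exact le_sup_of_le_right inf_le_right
    · exact le_sup_of_le_left (le_sup_of_le_right inf_le_right)
    · exact le_sup_of_le_left (le_sup_of_le_left inf_le_right)
  · refine sup_le (sup_le ?_ ?_) ?_
    · -- Nc ≤ big sup, since Nc = Vn ⊔ Vs ⊔ Ve ⊔ Vse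
      have h1 : Vn Nc Ns Ne ⊔ Vs Nc Ns Ne ⊔ Ve Nc Ns Ne ≤ Nc :=
        sup_le (sup_le (inf_le_left.trans inf_le_left) inf_le_right)
          (inf_le_left.trans inf_le_right)
      have h2 := key _ _ h1
      rw [show Vse Nc Ns Ne = (Vn Nc Ns Ne ⊔ Vs Nc Ns Ne ⊔ Ve Nc Ns Ne)ᗮ ⊓ Nc from rfl] at hG
      calc Nc = Vn Nc Ns Ne ⊔ Vs Nc Ns Ne ⊔ Ve Nc Ns Ne ⊔
            ((Vn Nc Ns Ne ⊔ Vs Nc Ns Ne ⊔ Ve Nc Ns Ne)ᗮ ⊓ Nc) := h2.symm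
        _ ≤ _ := sup_le (sup_le (sup_le hA hC) hD) hG
    · have h1 : Vn Nc Ns Ne ⊔ Ve Nc Ns Ne ⊔ Vc Nc Ns Ne ≤ Ns :=
        sup_le (sup_le (inf_le_left.trans inf_le_right) inf_le_right)
          (inf_le_left.trans inf_le_right)
      have h2 := key _ _ h1
      rw [show Vce Nc Ns Ne = (Vn Nc Ns Ne ⊔ Ve Nc Ns Ne ⊔ Vc Nc Ns Ne)ᗮ ⊓ Ns from rfl] at hF
      calc Ns = Vn Nc Ns Ne ⊔ Ve Nc Ns Ne ⊔ Vc Nc Ns Ne ⊔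
            ((Vn Nc Ns Ne ⊔ Ve Nc Ns Ne ⊔ Vc Nc Ns Ne)ᗮ ⊓ Ns) := h2.symm
        _ ≤ _ := sup_le (sup_le (sup_le hA hD) hB) hF
    · have h1 : Vn Nc Ns Ne ⊔ Vc Nc Ns Ne ⊔ Vs Nc Ns Ne ≤ Ne :=
        sup_le (sup_le inf_le_right inf_le_right) (inf_le_left.trans inf_le_right)
      have h2 := key _ _ h1
      rw [show Vcs Nc Ns Ne = (Vn Nc Ns Ne ⊔ Vc Nc Ns Ne ⊔ Vs Nc Ns Ne)ᗮ ⊓ Ne from rfl] at hE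
      calc Ne = Vn Nc Ns Ne ⊔ Vc Nc Ns Ne ⊔ Vs Nc Ns Ne ⊔
            ((Vn Nc Ns Ne ⊔ Vc Nc Ns Ne ⊔ Vs Nc Ns Ne)ᗮ ⊓ Ne) := h2.symm
        _ ≤ _ := sup_le (sup_le (sup_le hA hB) hC) hE
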